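/- Every element $x$ of a TRO $T \subseteq \mathcal{B}(H)$ has a cube root: there exists $y \in T$ with $x = yy^*y$. -/

import Mathlib

open scoped Polynomial

private lemma tro_cuberoot_sub_le {u v : ℝ} (hv : 0 ≤ v) (h : v ≤ u) :
    u ^ (3⁻¹ : ℝ) - v ^ (3⁻¹ : ℝ) ≤ (u - v) ^ (3⁻¹ : ℝ) := by
  have hw : 0 ≤ u - v := by linarith
  have key : u ^ (3⁻¹ : ℝ) ≤ v ^ (3⁻¹ : ℝ) + (u - v) ^ (3⁻¹ : ℝ) := by
    have hadd : ((v.toNNReal + (u - v).toNNReal : NNReal) : ℝ) = u := by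
      push_cast [Real.coe_toNNReal _ hv, Real.coe_toNNReal _ hw]; ring
    calc u ^ (3⁻¹ : ℝ) = ((v.toNNReal + (u - v).toNNReal : NNReal) : ℝ) ^ (3⁻¹ : ℝ) := by
          rw [hadd]
      _ = (((v.toNNReal + (u - v).toNNReal) ^ (3⁻¹ : ℝ) : NNReal) : ℝ) := by
          rw [NNReal.coe_rpow]
      _ ≤ ((v.toNNReal ^ (3⁻¹ : ℝ) + (u - v).toNNReal ^ (3⁻¹ : ℝ) : NNReal) : ℝ) := by
          exact_mod_cast NNReal.rpow_add_le_add_rpow _ _ (by norm_num) (by norm_num)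
      _ = v ^ (3⁻¹ : ℝ) + (u - v) ^ (3⁻¹ : ℝ) := by
          push_cast [NNReal.coe_rpow, Real.coe_toNNReal _ hv, Real.coe_toNNReal _ hw]; ring
  linarith

private lemma tro_key_bound {η ε δ t : ℝ} (hε : 0 < ε) (hεη : ε ≤ η) (hδ : 0 < δ)
    (hδη : δ ≤ η) (ht : 0 ≤ t) :
    ((t + ε) ^ (-(3⁻¹) : ℝ) - (t + δ) ^ (-(3⁻¹) : ℝ)) ^ 2 * t ≤ η ^ (3⁻¹ : ℝ) := by
  have hη : 0 < η := hε.trans_le hεη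
  rcases ht.eq_or_lt with h0 | htpos
  · rw [← h0, mul_zero]
    exact Real.rpow_nonneg hη.le _
  have hA : (0:ℝ) < t + ε := by linarith
  have hB : (0:ℝ) < t + δ := by linarith
  set P := (t + ε) ^ (3⁻¹ : ℝ) with hP_def
  set Q := (t + δ) ^ (3⁻¹ : ℝ) with hQ_def
  set R := t ^ (3⁻¹ : ℝ) with hR_def
  have hPpos : 0 < P := Real.rpow_pos_of_pos hA _
  have hQpos : 0 < Q := Real.rpow_pos_of_pos hB _
  have hRpos : 0 < R := Real.rpow_pos_of_pos htpos _
  have hRP : R ≤ P := Real.rpow_le_rpow ht (by linarith) (by norm_num)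
  have hRQ : R ≤ Q := Real.rpow_le_rpow ht (by linarith) (by norm_num)
  have hR3 : R ^ 3 = t := by
    rw [hR_def, ← Real.rpow_natCast (t ^ (3⁻¹ : ℝ)) 3, ← Real.rpow_mul ht]
    norm_num
  have hrw : ((t + ε) ^ (-(3⁻¹) : ℝ) - (t + δ) ^ (-(3⁻¹) : ℝ)) = P⁻¹ - Q⁻¹ := by
    rw [Real.rpow_neg hA.le, Real.rpow_neg hB.le]
  rw [hrw]
  by_cases htη : t ≤ η
  · -- small t case
    have habs : |P⁻¹ - Q⁻¹| ≤ R⁻¹ := by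
      rw [abs_sub_le_iff]
      constructor
      · have := inv_anti₀ hRpos hRP
        have := inv_nonneg.mpr hQpos.le
        linarith
      · have := inv_anti₀ hRpos hRQ
        have := inv_nonneg.mpr hPpos.le
        linarith
    have h1 : (P⁻¹ - Q⁻¹) ^ 2 * t ≤ (R⁻¹) ^ 2 * t := by
      apply mul_le_mul_of_nonneg_right _ ht
      calc (P⁻¹ - Q⁻¹) ^ 2 = |P⁻¹ - Q⁻¹| ^ 2 := (sq_abs _).symm
        _ ≤ (R⁻¹) ^ 2 := by
            apply pow_le_pow_left₀ (abs_nonneg _) habs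
    have h2 : (R⁻¹) ^ 2 * t = R := by
      rw [← hR3]; field_simp
    have h3 : R ≤ η ^ (3⁻¹ : ℝ) := Real.rpow_le_rpow ht htη (by norm_num)
    calc (P⁻¹ - Q⁻¹) ^ 2 * t ≤ (R⁻¹) ^ 2 * t := h1
      _ = R := h2
      _ ≤ η ^ (3⁻¹ : ℝ) := h3
  · -- large t case
    push_neg at htη
    set E := η ^ (3⁻¹ : ℝ) with hE_def
    have hEpos : 0 < E := Real.rpow_pos_of_pos hη _
    have hER : E ≤ R := Real.rpow_le_rpow hη.le htη.le (by norm_num)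
    have hPQ : |P - Q| ≤ E := by
      rcases le_total δ ε with hle | hle
      · have h1 : Q ≤ P := Real.rpow_le_rpow hB.le (by linarith) (by norm_num)
        have h2 : P - Q ≤ ((t + ε) - (t + δ)) ^ (3⁻¹ : ℝ) :=
          tro_cuberoot_sub_le hB.le (by linarith)
        have h3 : ((t + ε) - (t + δ)) ^ (3⁻¹ : ℝ) ≤ E := by
          apply Real.rpow_le_rpow (by linarith) (by linarith) (by norm_num)
        rw [abs_of_nonneg (by linarith)]; linarith
      · have h1 : P ≤ Q := Real.rpow_le_rpow hA.le (by linarith) (by norm_num)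
        have h2 : Q - P ≤ ((t + δ) - (t + ε)) ^ (3⁻¹ : ℝ) :=
          tro_cuberoot_sub_le hA.le (by linarith)
        have h3 : ((t + δ) - (t + ε)) ^ (3⁻¹ : ℝ) ≤ E := by
          apply Real.rpow_le_rpow (by linarith) (by linarith) (by norm_num)
        rw [abs_of_nonpos (by linarith)]; linarith
    have hdiff : |P⁻¹ - Q⁻¹| ≤ E / (R * R) := by
      have heq : P⁻¹ - Q⁻¹ = (Q - P) / (P * Q) := by field_simp
      have hQP : |Q - P| ≤ E := by rw [abs_sub_comm]; exact hPQ
      calc |P⁻¹ - Q⁻¹| = |Q - P| / (P * Q) := by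
            rw [heq, abs_div, abs_of_pos (mul_pos hPpos hQpos)]
        _ ≤ E / (R * R) :=
            div_le_div₀ hEpos.le hQP (mul_pos hRpos hRpos)
              (mul_le_mul hRP hRQ hRpos.le hPpos.le)
    have h1 : (P⁻¹ - Q⁻¹) ^ 2 * t ≤ (E / (R * R)) ^ 2 * t := by
      apply mul_le_mul_of_nonneg_right _ ht
      calc (P⁻¹ - Q⁻¹) ^ 2 = |P⁻¹ - Q⁻¹| ^ 2 := (sq_abs _).symm
        _ ≤ (E / (R * R)) ^ 2 := pow_le_pow_left₀ (abs_nonneg _) hdiff 2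
    have h2 : (E / (R * R)) ^ 2 * t = E ^ 2 / R := by
      rw [← hR3]; field_simp
    have h3 : E ^ 2 / R ≤ E := by
      rw [div_le_iff₀ hRpos]
      nlinarith
    calc (P⁻¹ - Q⁻¹) ^ 2 * t ≤ (E / (R * R)) ^ 2 * t := h1
      _ = E ^ 2 / R := h2
      _ ≤ E := h3

private lemma tro_quarter_bound {ε t : ℝ} (hε : 0 < ε) (ht : 0 ≤ t) :
    (ε / (t + ε)) ^ 2 * t ≤ ε := by
  have h : (0:ℝ) < t + ε := by linarith
  rw [div_pow, div_mul_eq_mul_div, div_le_iff₀ (by positivity)]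
  nlinarith [sq_nonneg (t - ε), mul_nonneg (mul_nonneg hε.le hε.le) ht]

set_option maxHeartbeats 1000000 in
/-- Every element `x` of a TRO `T` (a norm-closed subspace of a C*-algebra with
`a b* c ∈ T` for `a, b, c ∈ T`) has a cube root: some `y ∈ T` with `x = y y* y`. -/
theorem tro_cube_root {A : Type*} [CStarAlgebra A] (T : Set A)
    (hTclosed : IsClosed T) (hT0 : (0 : A) ∈ T)
    (hTadd : ∀ x ∈ T, ∀ y ∈ T, x + y ∈ T) (hTneg : ∀ x ∈ T, -x ∈ T)
    (hTsmul : ∀ c : ℂ, ∀ x ∈ T, c • x ∈ T)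
    (hTtro : ∀ x ∈ T, ∀ y ∈ T, ∀ z ∈ T, x * star y * z ∈ T) :
    ∀ x ∈ T, ∃ y ∈ T, x = y * star y * y := by
  obtain hA | hA := subsingleton_or_nontrivial A
  · exact fun x hx => ⟨x, hx, Subsingleton.elim _ _⟩
  intro x hx
  set a := x * star x with ha_def
  have ha_sa : IsSelfAdjoint a := by simp [ha_def, IsSelfAdjoint, star_mul]
  have hspec0 : ∀ t ∈ spectrum ℝ a, 0 ≤ t := by
    have := spectrum_star_mul_self_nonneg (A := A) (b := star x)
    rwa [star_star] at this
  -- real scalars act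
  have hsmulR : ∀ (c : ℝ), ∀ z ∈ T, c • z ∈ T := by
    intro c z hz
    have : c • z = (c : ℂ) • z := by rw [← algebraMap_smul ℂ c z]; norm_num
    rw [this]; exact hTsmul _ _ hz
  -- powers of a times x stay in T
  have hpow : ∀ n : ℕ, a ^ n * x ∈ T := by
    intro n
    induction n with
    | zero => simpa using hx
    | succ n ih =>
      have h := hTtro x hx x hx _ ih
      have heq : a ^ (n + 1) * x = x * star x * (a ^ n * x) := by
        rw [← ha_def, pow_succ', mul_assoc]
      rw [heq]; exact h
  -- polynomials in a times x stay in T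
  have hpoly : ∀ p : ℝ[X], (Polynomial.aeval a) p * x ∈ T := by
    intro p
    induction p using Polynomial.induction_on' with
    | add p q hp hq => rw [map_add, add_mul]; exact hTadd _ hp _ hq
    | monomial n c =>
      rw [Polynomial.aeval_monomial]
      have : algebraMap ℝ A c * a ^ n * x = c • (a ^ n * x) := by
        rw [Algebra.algebraMap_eq_smul_one, smul_mul_assoc, smul_mul_assoc, one_mul]
      rw [this]
      exact hsmulR _ _ (hpow n)
  -- continuous functions of a times x stay in T
  have hmemT : ∀ f : ℝ → ℝ, Continuous f → cfc f a * x ∈ T := by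
    intro f hf
    rw [← hTclosed.closure_eq, Metric.mem_closure_iff]
    intro r hr
    have hden : (0:ℝ) < ‖x‖ + 1 := by positivity
    obtain ⟨p, hp⟩ := exists_polynomial_near_of_continuousOn 0 ‖a‖ f hf.continuousOn
      (r / (‖x‖ + 1)) (by positivity)
    refine ⟨(Polynomial.aeval a) p * x, hpoly p, ?_⟩
    rw [dist_eq_norm]
    have hsub : cfc f a * x - (Polynomial.aeval a) p * x
        = cfc (fun t => f t - p.eval t) a * x := by
      rw [cfc_sub _ _ a hf.continuousOn p.continuous.continuousOn,
        cfc_polynomial p a ha_sa, sub_mul]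
    rw [hsub]
    calc ‖cfc (fun t => f t - p.eval t) a * x‖
        ≤ ‖cfc (fun t => f t - p.eval t) a‖ * ‖x‖ := norm_mul_le _ _
      _ ≤ (r / (‖x‖ + 1)) * ‖x‖ := by
          apply mul_le_mul_of_nonneg_right _ (norm_nonneg x)
          refine norm_cfc_le (by positivity) fun t ht => ?_
          have h1 : |t| ≤ ‖a‖ := by simpa using spectrum.norm_le_norm_of_mem ht
          have h2 := hp t ⟨hspec0 t ht, (le_abs_self t).trans h1⟩
          rw [Real.norm_eq_abs, abs_sub_comm]
          exact h2.le
      _ < r := by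
          rw [div_mul_eq_mul_div, div_lt_iff₀ hden]
          nlinarith [norm_nonneg x, hr]
  -- the key algebraic identity : (g(a)x)(g(a)x)* = (g^2·id)(a)
  have hmul3 : ∀ g : ℝ → ℝ, Continuous g →
      (cfc g a * x) * star (cfc g a * x) = cfc (fun t => g t ^ 2 * t) a := by
    intro g hg
    have hd : IsSelfAdjoint (cfc g a) := cfc_predicate g a
    have h1 : (cfc g a * x) * star (cfc g a * x) = cfc g a * a * cfc g a := by
      rw [star_mul, hd.star_eq, ha_def]
      simp only [mul_assoc]
    rw [h1]
    nth_rw 2 [← cfc_id' ℝ a ha_sa]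
    rw [← cfc_mul g (fun t : ℝ => t) a hg.continuousOn continuous_id'.continuousOn,
        ← cfc_mul (fun t : ℝ => g t * t) g a
          ((hg.mul continuous_id').continuousOn) hg.continuousOn]
    exact cfc_congr fun t _ => by ring
  -- norm identity
  have hnorm : ∀ g : ℝ → ℝ, Continuous g →
      ‖cfc g a * x‖ ^ 2 = ‖cfc (fun t => g t ^ 2 * t) a‖ := by
    intro g hg
    rw [sq, ← CStarRing.norm_self_mul_star, hmul3 g hg]
  -- the cube identity
  have hcube : ∀ g : ℝ → ℝ, Continuous g →
      (cfc g a * x) * star (cfc g a * x) * (cfc g a * x)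
        = cfc (fun t => g t ^ 3 * t) a * x := by
    intro g hg
    rw [hmul3 g hg, ← mul_assoc,
      ← cfc_mul (fun t : ℝ => g t ^ 2 * t) g a
        (((hg.pow 2).mul continuous_id').continuousOn) hg.continuousOn]
    exact congrArg (· * x) (cfc_congr fun t _ => by ring)
  -- approximating sequence
  set e : ℕ → ℝ := fun n => ((n : ℝ) + 1)⁻¹ with he_def
  have he_pos : ∀ n, 0 < e n := fun n => by positivity
  have he_anti : ∀ N n, N ≤ n → e n ≤ e N := by
    intro N n h
    apply inv_anti₀ (by positivity)
    have : (N : ℝ) ≤ (n : ℝ) := Nat.cast_le.mpr h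
    linarith
  set f : ℕ → ℝ → ℝ := fun n t => (max t 0 + e n) ^ (-(3⁻¹) : ℝ) with hf_def
  have hf_cont : ∀ n, Continuous (f n) := by
    intro n
    apply Continuous.rpow_const
    · fun_prop
    · intro t
      left
      have h1 := he_pos n
      have h2 : (0:ℝ) ≤ max t 0 := le_max_right t 0
      exact ne_of_gt (by linarith)
  set y : ℕ → A := fun n => cfc (f n) a * x with hy_def
  have hyT : ∀ n, y n ∈ T := fun n => hmemT (f n) (hf_cont n)
  -- the Cauchy estimate
  have hdist : ∀ N n m, N ≤ n → N ≤ m →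
      dist (y n) (y m) ≤ Real.sqrt ((e N) ^ (3⁻¹ : ℝ)) := by
    intro N n m hn hm
    rw [dist_eq_norm]
    apply Real.le_sqrt_of_sq_le
    have hsub : y n - y m = cfc (fun t => f n t - f m t) a * x := by
      simp only [hy_def]
      rw [cfc_sub _ _ a (hf_cont n).continuousOn (hf_cont m).continuousOn, sub_mul]
    rw [hsub, hnorm (fun t => f n t - f m t) ((hf_cont n).sub (hf_cont m))]
    refine norm_cfc_le (Real.rpow_nonneg (he_pos N).le _) fun t ht => ?_
    have ht0 := hspec0 t ht
    have hkey := tro_key_bound (he_pos n) (he_anti N n hn) (he_pos m) (he_anti N m hm) ht0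
    rw [Real.norm_eq_abs, abs_of_nonneg (mul_nonneg (sq_nonneg _) ht0)]
    simpa [hf_def, max_eq_left ht0] using hkey
  -- convergence of e and bounds
  have he_tendsto : Filter.Tendsto e Filter.atTop (nhds 0) := by
    have := tendsto_one_div_add_atTop_nhds_zero_nat (𝕜 := ℝ)
    simpa [he_def, one_div] using this
  have hb_tendsto : Filter.Tendsto (fun N => Real.sqrt ((e N) ^ (3⁻¹ : ℝ)))
      Filter.atTop (nhds 0) := by
    have h1 : Filter.Tendsto (fun N => (e N) ^ (3⁻¹ : ℝ)) Filter.atTop (nhds 0) := by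
      have := he_tendsto.rpow_const (Or.inr (by norm_num : (0:ℝ) ≤ 3⁻¹))
      rwa [Real.zero_rpow (by norm_num)] at this
    have := h1.sqrt
    rwa [Real.sqrt_zero] at this
  have hcauchy : CauchySeq y :=
    cauchySeq_of_le_tendsto_0 _ (fun n m N hn hm => hdist N n m hn hm) hb_tendsto
  obtain ⟨z, hz⟩ := cauchySeq_tendsto_of_complete hcauchy
  refine ⟨z, hTclosed.mem_of_tendsto hz (Filter.Eventually.of_forall hyT), ?_⟩
  -- limit of the cubes
  have hlim1 : Filter.Tendsto (fun n => y n * star (y n) * y n) Filter.atTop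
      (nhds (z * star z * z)) := (hz.mul hz.star).mul hz
  have hbound : ∀ n, ‖x - y n * star (y n) * y n‖ ^ 2 ≤ e n := by
    intro n
    have hc3 : Continuous fun t => f n t ^ 3 * t := ((hf_cont n).pow 3).mul continuous_id
    simp only [hy_def]
    rw [hcube (f n) (hf_cont n)]
    have hsub : x - cfc (fun t => f n t ^ 3 * t) a * x
        = cfc (fun t => 1 - f n t ^ 3 * t) a * x := by
      rw [cfc_sub _ _ a continuousOn_const hc3.continuousOn, sub_mul,
        cfc_const 1 a ha_sa, map_one, one_mul]
    rw [hsub, hnorm (fun t => 1 - f n t ^ 3 * t)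
      (continuous_const.sub hc3 : Continuous ((fun _ => (1:ℝ)) - fun t => f n t ^ 3 * t))]
    refine norm_cfc_le (he_pos n).le fun t ht => ?_
    have ht0 := hspec0 t ht
    have hmax : max t 0 = t := max_eq_left ht0
    have hAe : (0:ℝ) < t + e n := by have := he_pos n; linarith
    have hcube3 : f n t ^ 3 = (t + e n)⁻¹ := by
      show ((max t 0 + e n) ^ (-(3⁻¹) : ℝ)) ^ 3 = _
      rw [hmax, ← Real.rpow_natCast ((t + e n) ^ (-(3⁻¹) : ℝ)) 3,
        ← Real.rpow_mul hAe.le]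
      norm_num
      rw [Real.rpow_neg_one]
    have hval : 1 - f n t ^ 3 * t = e n / (t + e n) := by
      rw [hcube3]
      field_simp
      ring
    rw [Real.norm_eq_abs, abs_of_nonneg (mul_nonneg (sq_nonneg _) ht0), hval]
    exact tro_quarter_bound (he_pos n) ht0
  have hlim2 : Filter.Tendsto (fun n => y n * star (y n) * y n) Filter.atTop (nhds x) := by
    rw [tendsto_iff_norm_sub_tendsto_zero]
    have hs_tendsto : Filter.Tendsto (fun n => Real.sqrt (e n)) Filter.atTop (nhds 0) := by
      have := he_tendsto.sqrt
      rwa [Real.sqrt_zero] at this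
    refine squeeze_zero (fun n => norm_nonneg _) (fun n => ?_) hs_tendsto
    rw [norm_sub_rev]
    exact Real.le_sqrt_of_sq_le (hbound n)
  exact tendsto_nhds_unique hlim2 hlim1
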